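/- arXiv:1302.3783 — 3 statements merged into one kernel-verified Lean document; each statement's English description precedes it below -/
import Mathlib

section
/- Let w ∈ {0,1}^ω and k ≥ 1 be such that every factor of w of length k contains at most one occurrence of the letter 1. Then two factors of w of the same length n ≥ k−1 are k-Abelian equivalent if and only if they are Abelian equivalent and have the same prefix of length k−1 and the same suffix of length k−1. Consequently ρ^{(k)}_w(n) ≤ ρ^{(1)}_w(n) · 4^{k−1} for all n, i.e., ρ^{(k)}_w(n) = Θ(ρ^{(1)}_w(n)). -/
/-- Number of occurrences of `x` as a factor of `u`. -/
def occ {α : Type*} [DecidableEq α] (u x : List α) : ℕ :=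
  ((List.range (u.length + 1)).filter (fun i => decide (x <+: u.drop i))).length

/-- `k`-Abelian equivalence: same number of occurrences of every word of length at most `k`. -/
def KAbEq {α : Type*} [DecidableEq α] (k : ℕ) (u v : List α) : Prop :=
  ∀ x : List α, x.length ≤ k → occ u x = occ v x

/-- The factor of the infinite word `w` of length `n` starting at position `i`. -/
def factorAt {α : Type*} (w : ℕ → α) (i n : ℕ) : List α :=
  (List.range n).map (fun j => w (i + j))

/-- `k`-Abelian complexity: the number of `k`-Abelian classes of length-`n` factors of `w`. -/
noncomputable def rho {α : Type*} [DecidableEq α] (k : ℕ) (w : ℕ → α) (n : ℕ) : ℕ :=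
  Set.ncard { C : Set (List α) | ∃ i : ℕ,
    C = { v | (∃ j : ℕ, v = factorAt w j n) ∧ KAbEq k v (factorAt w i n) } }


lemma occ_eq_card {α : Type*} [DecidableEq α] (u x : List α) :
    occ u x = ((Finset.range (u.length+1)).filter (fun i => x <+: u.drop i)).card := rfl

@[simp] lemma length_factorAt (w : ℕ → Bool) (i n : ℕ) : (factorAt w i n).length = n := by
  simp [factorAt]

lemma getElem_factorAt (w : ℕ → Bool) (i n j : ℕ) (hj : j < n) :
    (factorAt w i n)[j]'(by simpa) = w (i + j) := by simp [factorAt]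

lemma drop_factorAt (w : ℕ → Bool) (i n j : ℕ) :
    (factorAt w i n).drop j = factorAt w (i+j) (n-j) := by
  apply List.ext_getElem
  · simp
  · intro m h1 h2
    simp [factorAt, Nat.add_assoc]

lemma take_factorAt (w : ℕ → Bool) (i n j : ℕ) :
    (factorAt w i n).take j = factorAt w i (min j n) := by
  apply List.ext_getElem
  · simp
  · intro m h1 h2
    simp [factorAt]

lemma cons_factorAt (w : ℕ → Bool) (i n : ℕ) :
    factorAt w i (n+1) = w i :: factorAt w (i+1) n := by
  apply List.ext_getElem
  · simp
  · intro m h1 h2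
    rcases m with _ | m
    · simp [factorAt]
    · simp [factorAt, Nat.add_comm 1 m, Nat.add_assoc]

lemma singleton_prefix_factorAt (w : ℕ → Bool) (a : Bool) (i n : ℕ) :
    [a] <+: factorAt w i n ↔ 0 < n ∧ w i = a := by
  rcases n with _ | n
  · simp [factorAt]
  · rw [cons_factorAt, List.cons_prefix_cons]
    simp [eq_comm]

section Gap
variable {w : ℕ → Bool} {k : ℕ}

lemma gap (h : ∀ i, occ (factorAt w i k) [true] ≤ 1)
    {p q : ℕ} (hpq : p < q) (hqk : q < p + k) (hp : w p = true) (hq : w q = true) : False := by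
  have h1 := h p
  rw [occ_eq_card] at h1
  have hsub : ({0, q - p} : Finset ℕ) ⊆ (Finset.range ((factorAt w p k).length + 1)).filter
      (fun i => [true] <+: (factorAt w p k).drop i) := by
    intro i hi
    simp only [Finset.mem_insert, Finset.mem_singleton] at hi
    rcases hi with rfl | rfl
    · simp only [Finset.mem_filter, Finset.mem_range, length_factorAt, drop_factorAt,
        singleton_prefix_factorAt]
      exact ⟨by omega, by omega, by simpa using hp⟩
    · simp only [Finset.mem_filter, Finset.mem_range, length_factorAt, drop_factorAt,
        singleton_prefix_factorAt]
      refine ⟨by omega, by omega, ?_⟩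
      have hpq2 : p + (q - p) = q := by omega
      rw [hpq2]; exact hq
  have hcard : ({0, q - p} : Finset ℕ).card = 2 := by
    rw [Finset.card_insert_of_notMem (by simp; omega), Finset.card_singleton]
  have := Finset.card_le_card hsub
  omega

lemma onetrue_prefix_iff (h : ∀ i, occ (factorAt w i k) [true] ≤ 1)
    (c d j m : ℕ) (hcd : c + d + 1 ≤ k) :
    (List.replicate c false ++ true :: List.replicate d false) <+: factorAt w j m ↔
      (c + d + 1 ≤ m ∧ w (j + c) = true) := by
  constructor
  · intro hpre
    have hlen : c + d + 1 ≤ m := by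
      have := hpre.length_le
      simpa [Nat.add_comm, Nat.add_assoc, Nat.add_left_comm] using this
    refine ⟨hlen, ?_⟩
    have hc : c < (List.replicate c false ++ true :: List.replicate d false).length := by
      simp
    have hg := hpre.getElem hc
    rw [List.getElem_append_right (by simp)] at hg
    rw [getElem_factorAt w j m c (by omega)] at hg
    simp at hg
    first | exact hg | exact hg.symm
  · rintro ⟨hm, ht⟩
    have hfalse : ∀ t, t < c + d + 1 → t ≠ c → w (j + t) = false := by
      intro t h1 hne
      cases hw : w (j + t) with
      | false => rfl
      | true =>
        rcases lt_or_gt_of_ne hne with hlt | hgt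
        · exact (gap h (show j + t < j + c by omega) (by omega) hw ht).elim
        · exact (gap h (show j + c < j + t by omega) (by omega) ht hw).elim
    have heq : (List.replicate c false ++ true :: List.replicate d false) = factorAt w j (c + d + 1) := by
      have hsplit : factorAt w j (c + d + 1) = factorAt w j c ++ factorAt w (j + c) (d + 1) := by
        conv_lhs => rw [← List.take_append_drop c (factorAt w j (c + d + 1))]
        rw [take_factorAt, drop_factorAt]
        congr 1
        · congr 1; omega
        · congr 1; omega
      rw [hsplit, cons_factorAt]
      congr 1
      · symm
        rw [List.eq_replicate_iff]
        refine ⟨by simp, ?_⟩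
        intro b hb
        simp only [factorAt, List.mem_map, List.mem_range] at hb
        obtain ⟨t, htlt, rfl⟩ := hb
        exact hfalse t (by omega) (by omega)
      · congr 1
        · exact ht.symm
        · symm
          rw [List.eq_replicate_iff]
          refine ⟨by simp, ?_⟩
          intro b hb
          simp only [factorAt, List.mem_map, List.mem_range] at hb
          obtain ⟨t, htlt, rfl⟩ := hb
          have : j + c + 1 + t = j + (c + 1 + t) := by omega
          rw [this]
          exact hfalse (c + 1 + t) (by omega) (by omega)
    rw [heq]
    have h2 : factorAt w j (c + d + 1) = (factorAt w j m).take (c + d + 1) := by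
      rw [take_factorAt, min_eq_left hm]
    rw [h2]
    exact List.take_prefix _ _
end Gap

section Count
variable {w : ℕ → Bool} {k : ℕ}

/-- number of occurrences of a one-true word as positions of true letters -/
lemma occ_onetrue (h : ∀ i, occ (factorAt w i k) [true] ≤ 1)
    (c d i0 n : ℕ) (hcd : c + d + 1 ≤ k) :
    occ (factorAt w i0 n) (List.replicate c false ++ true :: List.replicate d false) =
      ((Finset.range n).filter (fun p => c ≤ p ∧ p + d + 1 ≤ n ∧ w (i0 + p) = true)).card := by
  rw [occ_eq_card]
  apply Finset.card_bij (fun i _ => i + c)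
  · intro i hi
    simp only [Finset.mem_filter, Finset.mem_range, length_factorAt, drop_factorAt,
      onetrue_prefix_iff h c d _ _ hcd] at hi
    obtain ⟨hin, hlen, htrue⟩ := hi
    simp only [Finset.mem_filter, Finset.mem_range]
    refine ⟨by omega, by omega, by omega, ?_⟩
    have : i0 + (i + c) = i0 + i + c := by omega
    rw [this]; exact htrue
  · intro a _ b _ hab; omega
  · intro p hp
    simp only [Finset.mem_filter, Finset.mem_range] at hp
    obtain ⟨hpn, hcp, hpd, htrue⟩ := hp
    refine ⟨p - c, ?_, by omega⟩
    simp only [Finset.mem_filter, Finset.mem_range, length_factorAt, drop_factorAt,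
      onetrue_prefix_iff h c d _ _ hcd]
    refine ⟨by omega, by omega, ?_⟩
    have : i0 + (p - c) + c = i0 + p := by omega
    rw [this]; exact htrue

lemma occ_true (i0 n : ℕ) (hk : 1 ≤ k) (h : ∀ i, occ (factorAt w i k) [true] ≤ 1) :
    occ (factorAt w i0 n) [true] =
      ((Finset.range n).filter (fun p => w (i0 + p) = true)).card := by
  have := occ_onetrue h 0 0 i0 n (by omega)
  simp only [List.replicate_zero, List.nil_append] at this
  rw [this]
  congr 1
  apply Finset.filter_congr
  intro p hp
  simp only [Finset.mem_range] at hp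
  constructor
  · rintro ⟨_, _, ht⟩; exact ht
  · intro ht; exact ⟨by omega, by omega, ht⟩

/-- splitting the count of true positions into low / middle / high -/
lemma count_split (i0 n c d : ℕ) (hcd : c + d + 1 ≤ n) :
    ((Finset.range n).filter (fun p => w (i0 + p) = true)).card =
      ((Finset.range n).filter (fun p => p < c ∧ w (i0 + p) = true)).card +
      ((Finset.range n).filter (fun p => c ≤ p ∧ p + d + 1 ≤ n ∧ w (i0 + p) = true)).card +
      ((Finset.range n).filter (fun p => n < p + d + 1 ∧ w (i0 + p) = true)).card := by
  have h1 : (Finset.range n).filter (fun p => w (i0 + p) = true) =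
      ((Finset.range n).filter (fun p => p < c ∧ w (i0 + p) = true)) ∪
      (((Finset.range n).filter (fun p => c ≤ p ∧ p + d + 1 ≤ n ∧ w (i0 + p) = true)) ∪
      ((Finset.range n).filter (fun p => n < p + d + 1 ∧ w (i0 + p) = true))) := by
    ext p
    simp only [Finset.mem_filter, Finset.mem_range, Finset.mem_union]
    constructor
    · rintro ⟨hpn, ht⟩
      by_cases h2 : p < c
      · exact Or.inl ⟨hpn, h2, ht⟩
      · by_cases h3 : p + d + 1 ≤ n
        · exact Or.inr (Or.inl ⟨hpn, by omega, h3, ht⟩)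
        · exact Or.inr (Or.inr ⟨hpn, by omega, ht⟩)
    · rintro (⟨hpn, _, ht⟩ | ⟨hpn, _, _, ht⟩ | ⟨hpn, _, ht⟩) <;> exact ⟨hpn, ht⟩
  rw [h1, Finset.card_union_of_disjoint, Finset.card_union_of_disjoint]
  · ring
  · rw [Finset.disjoint_left]
    intro p hp hq
    simp only [Finset.mem_filter, Finset.mem_range] at hp hq
    omega
  · rw [Finset.disjoint_left]
    intro p hp hq
    simp only [Finset.mem_filter, Finset.mem_range, Finset.mem_union] at hp hq
    rcases hq with hq | hq <;> omega
end Count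

lemma occ_eq_sum {α : Type*} [DecidableEq α] (u x : List α) :
    occ u x = ∑ i ∈ Finset.range (u.length + 1), if x <+: u.drop i then 1 else 0 := by
  rw [occ_eq_card, Finset.card_filter]

section ZeroWord
variable {w : ℕ → Bool} {k : ℕ}

lemma occ_zero_sum (h : ∀ i, occ (factorAt w i k) [true] ≤ 1)
    (a i0 n : ℕ) (ha : a ≤ k) (han : a ≤ n) :
    occ (factorAt w i0 n) (List.replicate a false) +
      ∑ c ∈ Finset.range a,
        occ (factorAt w i0 n) (List.replicate c false ++ true :: List.replicate (a-1-c) false) =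
      n + 1 - a := by
  have hlen : (factorAt w i0 n).length = n := length_factorAt w i0 n
  calc occ (factorAt w i0 n) (List.replicate a false) +
      ∑ c ∈ Finset.range a,
        occ (factorAt w i0 n) (List.replicate c false ++ true :: List.replicate (a-1-c) false)
      = ∑ i ∈ Finset.range (n+1),
          ((if List.replicate a false <+: (factorAt w i0 n).drop i then 1 else 0) +
           ∑ c ∈ Finset.range a,
             (if (List.replicate c false ++ true :: List.replicate (a-1-c) false) <+:
                 (factorAt w i0 n).drop i then 1 else 0)) := by
        rw [Finset.sum_add_distrib, occ_eq_sum, hlen]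
        congr 1
        rw [Finset.sum_comm]
        apply Finset.sum_congr rfl
        intro c _
        rw [occ_eq_sum, hlen]
    _ = ∑ i ∈ Finset.range (n+1), (if i + a ≤ n then 1 else 0) := by
        apply Finset.sum_congr rfl
        intro i hi
        simp only [Finset.mem_range] at hi
        rw [drop_factorAt]
        by_cases hle : i + a ≤ n
        · by_cases hT : ∃ c, c < a ∧ w (i0 + i + c) = true
          · obtain ⟨c0, hc0a, hc0t⟩ := hT
            have hz : ¬ (List.replicate a false <+: factorAt w (i0 + i) (n - i)) := by
              intro hpre
              have hg := hpre.getElem (show c0 < (List.replicate a false).length by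
                simpa using hc0a)
              rw [List.getElem_replicate, getElem_factorAt w _ _ c0 (by omega)] at hg
              rw [hc0t] at hg
              exact absurd hg (by simp)
            have hsum : (∑ c ∈ Finset.range a,
                (if (List.replicate c false ++ true :: List.replicate (a-1-c) false) <+:
                  factorAt w (i0 + i) (n - i) then 1 else 0)) = 1 := by
              rw [Finset.sum_eq_single_of_mem c0 (Finset.mem_range.mpr hc0a)]
              · simp only [onetrue_prefix_iff h c0 (a-1-c0) (i0+i) (n-i) (by omega)]
                rw [if_pos ⟨by omega, hc0t⟩]
              · intro b hb hbne
                simp only [Finset.mem_range] at hb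
                simp only [onetrue_prefix_iff h b (a-1-b) (i0+i) (n-i) (by omega)]
                rw [if_neg]
                rintro ⟨-, hbt⟩
                rcases lt_or_gt_of_ne hbne with hlt | hgt
                · exact (gap h (show i0 + i + b < i0 + i + c0 by omega) (by omega) hbt hc0t).elim
                · exact (gap h (show i0 + i + c0 < i0 + i + b by omega) (by omega) hc0t hbt).elim
            rw [if_neg hz, hsum, if_pos hle]
          · push_neg at hT
            have h1 : List.replicate a false <+: factorAt w (i0 + i) (n - i) := by
              have heq : List.replicate a false = factorAt w (i0 + i) a := by
                symm
                rw [List.eq_replicate_iff]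
                refine ⟨by simp, ?_⟩
                intro b hb
                simp only [factorAt, List.mem_map, List.mem_range] at hb
                obtain ⟨t, htlt, rfl⟩ := hb
                have := hT t htlt
                rw [show i0 + i + t = i0 + i + t from rfl] at this
                simpa using this
              rw [heq, show factorAt w (i0+i) a = (factorAt w (i0+i) (n-i)).take a by
                rw [take_factorAt, min_eq_left (by omega)]]
              exact List.take_prefix _ _
            have hsum : (∑ c ∈ Finset.range a,
                (if (List.replicate c false ++ true :: List.replicate (a-1-c) false) <+:
                  factorAt w (i0 + i) (n - i) then 1 else 0)) = 0 := by
              apply Finset.sum_eq_zero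
              intro c hc
              simp only [Finset.mem_range] at hc
              simp only [onetrue_prefix_iff h c (a-1-c) (i0+i) (n-i) (by omega)]
              rw [if_neg]
              rintro ⟨-, hct⟩
              exact absurd hct (hT c hc)
            rw [if_pos h1, hsum, if_pos hle]
        · have hz : ¬ (List.replicate a false <+: factorAt w (i0 + i) (n - i)) := by
            intro hpre
            have := hpre.length_le
            simp only [List.length_replicate, length_factorAt] at this
            omega
          have hsum : (∑ c ∈ Finset.range a,
              (if (List.replicate c false ++ true :: List.replicate (a-1-c) false) <+:
                factorAt w (i0 + i) (n - i) then 1 else 0)) = 0 := by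
            apply Finset.sum_eq_zero
            intro c hc
            simp only [Finset.mem_range] at hc
            rw [if_neg]
            intro hpre
            have := hpre.length_le
            simp only [List.length_append, List.length_replicate, List.length_cons,
              length_factorAt] at this
            omega
          rw [if_neg hz, hsum, if_neg hle]
    _ = n + 1 - a := by
        rw [← Finset.card_filter]
        have : (Finset.range (n+1)).filter (fun i => i + a ≤ n) = Finset.range (n + 1 - a) := by
          ext i
          simp only [Finset.mem_filter, Finset.mem_range]
          omega
        rw [this, Finset.card_range]
end ZeroWord

lemma occL (u x : List Bool) :
    occ u x = (if x <+: u then 1 else 0) + (occ u (true :: x) + occ u (false :: x)) := by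
  have key : ∀ (a : Bool), occ u (a :: x) =
      ∑ i ∈ Finset.range u.length, (if (a :: x) <+: u.drop i then 1 else 0) := by
    intro a
    rw [occ_eq_sum, Finset.sum_range_succ, List.drop_length]
    simp [List.prefix_nil]
  rw [occ_eq_sum, Finset.sum_range_succ' (fun i => if x <+: u.drop i then 1 else 0), key, key,
    ← Finset.sum_add_distrib]
  simp only [List.drop_zero]
  rw [add_comm]
  congr 1
  apply Finset.sum_congr rfl
  intro i hi
  simp only [Finset.mem_range] at hi
  rw [List.drop_eq_getElem_cons hi]
  cases hu : u[i] <;> by_cases hx : x <+: u.drop (i+1) <;>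
    simp [List.cons_prefix_cons, hx]

lemma sum_drop_eq (u x : List Bool) :
    ∑ i ∈ Finset.range (u.length + 1), (if u.drop i = x then 1 else 0) =
      (if x <:+ u then 1 else 0) := by
  rw [← Finset.card_filter]
  by_cases hs : x <:+ u
  · have : (Finset.range (u.length + 1)).filter (fun i => u.drop i = x) = {u.length - x.length} := by
      ext i
      simp only [Finset.mem_filter, Finset.mem_range, Finset.mem_singleton]
      constructor
      · rintro ⟨hi, hdrop⟩
        have := congrArg List.length hdrop
        simp only [List.length_drop] at this
        omega
      · rintro rfl
        refine ⟨by omega, ?_⟩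
        rw [List.suffix_iff_eq_drop] at hs
        exact hs.symm
    rw [this, Finset.card_singleton, if_pos hs]
  · rw [if_neg hs, Finset.card_eq_zero.mpr]
    ext i
    simp only [Finset.mem_filter, Finset.mem_range, Finset.notMem_empty, iff_false, not_and]
    intro _ hdrop
    exact hs (hdrop ▸ List.drop_suffix i u)

lemma occR (u x : List Bool) :
    occ u x = (if x <:+ u then 1 else 0) + (occ u (x ++ [true]) + occ u (x ++ [false])) := by
  rw [occ_eq_sum, ← sum_drop_eq u x, occ_eq_sum, occ_eq_sum, ← Finset.sum_add_distrib,
    ← Finset.sum_add_distrib]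
  apply Finset.sum_congr rfl
  intro i _
  set z := u.drop i with hz
  by_cases hp : x <+: z
  · by_cases he : z = x
    · have h1 : ∀ a : Bool, ¬ (x ++ [a] <+: z) := by
        intro a hpre
        have := hpre.length_le
        simp [he] at this
      rw [if_pos hp, if_pos he, if_neg (h1 true), if_neg (h1 false)]
      omega
    · have hlt : x.length < z.length := by
        rcases lt_or_eq_of_le hp.length_le with h1 | h1
        · exact h1
        · exact absurd (hp.eq_of_length h1).symm he
      have hone : ∀ a : Bool, (x ++ [a] <+: z) ↔ z[x.length]'hlt = a := by
        intro a
        constructor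
        · intro hpre
          have hg := hpre.getElem (show x.length < (x ++ [a]).length by simp)
          rw [List.getElem_append_right (by simp)] at hg
          simp at hg
          first | exact hg | exact hg.symm
        · intro ha
          have : x ++ [a] = z.take (x.length + 1) := by
            rw [List.take_succ]
            congr 1
            · exact List.prefix_iff_eq_take.mp hp
            · rw [List.getElem?_eq_getElem hlt, ha]
              rfl
          rw [this]
          exact List.take_prefix _ _
      cases hzx : z[x.length]'hlt
      · simp [hp, he, hone, hzx]
      · simp [hp, he, hone, hzx]
  · have h1 : ∀ a : Bool, ¬ (x ++ [a] <+: z) := by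
      intro a hpre
      exact hp (((List.prefix_append x [a])).trans hpre)
    have h2 : z ≠ x := by
      rintro rfl
      exact hp List.prefix_rfl
    simp [hp, h1, h2]

lemma KAbEq.refl {α : Type*} [DecidableEq α] (k : ℕ) (u : List α) : KAbEq k u u :=
  fun _ _ => rfl

lemma KAbEq.symm' {α : Type*} [DecidableEq α] {k : ℕ} {u v : List α} (h : KAbEq k u v) :
    KAbEq k v u := fun x hx => (h x hx).symm

lemma KAbEq.trans' {α : Type*} [DecidableEq α] {k : ℕ} {u v z : List α} (h : KAbEq k u v)
    (h2 : KAbEq k v z) : KAbEq k u z := fun x hx => (h x hx).trans (h2 x hx)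

lemma KAbEq.mono {α : Type*} [DecidableEq α] {k j : ℕ} {u v : List α} (hjk : j ≤ k)
    (h : KAbEq k u v) : KAbEq j u v := fun x hx => h x (le_trans hx hjk)

lemma occ_nil {α : Type*} [DecidableEq α] (u : List α) : occ u [] = u.length + 1 := by
  rw [occ_eq_card]
  rw [Finset.filter_true_of_mem (fun i _ => List.nil_prefix)]
  exact Finset.card_range _

lemma KAbEq.length_eq {α : Type*} [DecidableEq α] {k : ℕ} {u v : List α}
    (h : KAbEq k u v) : u.length = v.length := by
  have := h [] (by simp)
  rw [occ_nil, occ_nil] at this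
  omega

lemma prefix_iff_of_kabeq {k : ℕ} {u v x : List Bool} (hk : 1 ≤ k) (h : KAbEq k u v)
    (hx : x.length ≤ k - 1) : (x <+: u ↔ x <+: v) := by
  have e1 := occL u x
  have e2 := occL v x
  have q0 := h x (by omega)
  have q1 := h (true :: x) (by simp; omega)
  have q2 := h (false :: x) (by simp; omega)
  by_cases hu : x <+: u <;> by_cases hv : x <+: v
  · simp [hu, hv]
  · rw [if_pos hu] at e1; rw [if_neg hv] at e2; omega
  · rw [if_neg hu] at e1; rw [if_pos hv] at e2; omega
  · simp [hu, hv]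

lemma suffix_iff_of_kabeq {k : ℕ} {u v x : List Bool} (hk : 1 ≤ k) (h : KAbEq k u v)
    (hx : x.length ≤ k - 1) : (x <:+ u ↔ x <:+ v) := by
  have e1 := occR u x
  have e2 := occR v x
  have q0 := h x (by omega)
  have q1 := h (x ++ [true]) (by simp; omega)
  have q2 := h (x ++ [false]) (by simp; omega)
  by_cases hu : x <:+ u <;> by_cases hv : x <:+ v
  · simp [hu, hv]
  · rw [if_pos hu] at e1; rw [if_neg hv] at e2; omega
  · rw [if_neg hu] at e1; rw [if_pos hv] at e2; omega
  · simp [hu, hv]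

lemma take_eq_of_kabeq {k : ℕ} {u v : List Bool} (hk : 1 ≤ k) (h : KAbEq k u v) :
    u.take (k-1) = v.take (k-1) := by
  have hlen := h.length_eq
  have hx : (u.take (k-1)).length ≤ k - 1 := by simp
  have hpre : u.take (k-1) <+: v := (prefix_iff_of_kabeq hk h hx).mp (List.take_prefix _ _)
  rw [List.prefix_iff_eq_take] at hpre
  rw [hpre]
  apply List.take_eq_take_iff.mpr
  simp
  omega

lemma drop_eq_of_kabeq {k : ℕ} {u v : List Bool} (hk : 1 ≤ k) (h : KAbEq k u v) :
    u.drop (u.length - (k-1)) = v.drop (v.length - (k-1)) := by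
  have hlen := h.length_eq
  have hx : (u.drop (u.length - (k-1))).length ≤ k - 1 := by simp; omega
  have hsuf : u.drop (u.length - (k-1)) <:+ v :=
    (suffix_iff_of_kabeq hk h hx).mp (List.drop_suffix _ _)
  rw [List.suffix_iff_eq_drop] at hsuf
  rw [hsuf]
  congr 1
  simp
  omega

lemma getD_replicate_append_true (c : ℕ) (r : List Bool) :
    (List.replicate c false ++ true :: r).getD c false = true := by
  induction c with
  | zero => rfl
  | succ c ih => simpa [List.replicate_succ] using ih

lemma decomp (x : List Bool) :
    (x = List.replicate x.length false) ∨
    (∃ c d, c + d + 1 = x.length ∧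
      x = List.replicate c false ++ true :: List.replicate d false) ∨
    (∃ j1 j2, j1 < j2 ∧ j2 < x.length ∧ x.getD j1 false = true ∧ x.getD j2 false = true) := by
  induction x with
  | nil => left; rfl
  | cons b t ih =>
    cases b
    · rcases ih with h0 | ⟨c, d, hlen, heq⟩ | ⟨j1, j2, hj, hj2, h1, h2⟩
      · left
        rw [List.length_cons, List.replicate_succ]
        rw [← h0]
      · right; left
        exact ⟨c+1, d, by simp; omega, by rw [List.replicate_succ]; simp [heq]⟩
      · right; right
        exact ⟨j1+1, j2+1, by omega, by simp; omega, by simpa using h1, by simpa using h2⟩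
    · rcases ih with h0 | ⟨c, d, hlen, heq⟩ | ⟨j1, j2, hj, hj2, h1, h2⟩
      · right; left
        exact ⟨0, t.length, by simp, by simp [← h0]⟩
      · right; right
        refine ⟨0, c+1, by omega, by simp; omega, rfl, ?_⟩
        simp only [List.getD_cons_succ]
        rw [heq]
        exact getD_replicate_append_true c _
      · right; right
        exact ⟨j1+1, j2+1, by omega, by simp; omega, by simpa using h1, by simpa using h2⟩

lemma part1 (w : ℕ → Bool) (k : ℕ) (hk : 1 ≤ k)
    (h : ∀ i, occ (factorAt w i k) [true] ≤ 1)
    (n : ℕ) (hn : k - 1 ≤ n) (u v : List Bool)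
    (hu : ∃ i, u = factorAt w i n) (hv : ∃ i, v = factorAt w i n) :
    (KAbEq k u v ↔ KAbEq 1 u v ∧ u.take (k - 1) = v.take (k - 1) ∧
      u.drop (u.length - (k - 1)) = v.drop (v.length - (k - 1))) := by
  constructor
  · intro hkab
    exact ⟨hkab.mono hk, take_eq_of_kabeq hk hkab, drop_eq_of_kabeq hk hkab⟩
  · rintro ⟨h1, hpre, hsuf⟩
    obtain ⟨iu, rfl⟩ := hu
    obtain ⟨iv, rfl⟩ := hv
    by_cases hcase : n < k
    · have huv : factorAt w iu n = factorAt w iv n := by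
        rwa [List.take_of_length_le (by simp; omega), List.take_of_length_le (by simp; omega)]
          at hpre
      rw [huv]
      exact KAbEq.refl _ _
    · push_neg at hcase
      have hlow : ∀ p, p < k - 1 → w (iu + p) = w (iv + p) := by
        intro p hp
        have e := congrArg (fun l => l.getD p false) hpre
        simp only [take_factorAt] at e
        rw [List.getD_eq_getElem _ _ (by simp; omega), List.getD_eq_getElem _ _ (by simp; omega),
          getElem_factorAt w iu _ p (by omega), getElem_factorAt w iv _ p (by omega)] at e
        exact e
      have hhigh : ∀ p, n - (k-1) ≤ p → p < n → w (iu + p) = w (iv + p) := by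
        intro p hp1 hp2
        simp only [length_factorAt] at hsuf
        rw [drop_factorAt, drop_factorAt] at hsuf
        have e := congrArg (fun l => l.getD (p - (n - (k-1))) false) hsuf
        rw [List.getD_eq_getElem _ _ (by simp; omega), List.getD_eq_getElem _ _ (by simp; omega),
          getElem_factorAt w _ _ _ (by omega), getElem_factorAt w _ _ _ (by omega)] at e
        rw [show iu + (n - (k-1)) + (p - (n - (k-1))) = iu + p by omega,
          show iv + (n - (k-1)) + (p - (n - (k-1))) = iv + p by omega] at e
        exact e
      have hcountAll : ((Finset.range n).filter (fun p => w (iu + p) = true)).card =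
          ((Finset.range n).filter (fun p => w (iv + p) = true)).card := by
        rw [← occ_true iu n hk h, ← occ_true iv n hk h]
        exact h1 [true] (by simp)
      have honetrue : ∀ c d, c + d + 1 ≤ k →
          occ (factorAt w iu n) (List.replicate c false ++ true :: List.replicate d false) =
          occ (factorAt w iv n) (List.replicate c false ++ true :: List.replicate d false) := by
        intro c d hcd
        rw [occ_onetrue h c d iu n hcd, occ_onetrue h c d iv n hcd]
        have hsu := count_split (w := w) iu n c d (by omega)
        have hsv := count_split (w := w) iv n c d (by omega)
        have hLo : ((Finset.range n).filter (fun p => p < c ∧ w (iu + p) = true)).card =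
            ((Finset.range n).filter (fun p => p < c ∧ w (iv + p) = true)).card := by
          congr 1
          apply Finset.filter_congr
          intro p hp
          simp only [Finset.mem_range] at hp
          by_cases hpc : p < c
          · rw [hlow p (by omega)]
          · simp [hpc]
        have hHi : ((Finset.range n).filter (fun p => n < p + d + 1 ∧ w (iu + p) = true)).card =
            ((Finset.range n).filter (fun p => n < p + d + 1 ∧ w (iv + p) = true)).card := by
          congr 1
          apply Finset.filter_congr
          intro p hp
          simp only [Finset.mem_range] at hp
          by_cases hpc : n < p + d + 1
          · rw [hhigh p (by omega) (by omega)]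
          · simp [hpc]
        omega
      intro x hx
      rcases decomp x with hzero | ⟨c, d, hlen, heq⟩ | ⟨j1, j2, hj, hj2len, ht1, ht2⟩
      · have e1 := occ_zero_sum h x.length iu n (by omega) (by omega)
        have e2 := occ_zero_sum h x.length iv n (by omega) (by omega)
        have hsums : ∑ c ∈ Finset.range x.length,
            occ (factorAt w iu n)
              (List.replicate c false ++ true :: List.replicate (x.length-1-c) false) =
            ∑ c ∈ Finset.range x.length,
            occ (factorAt w iv n)
              (List.replicate c false ++ true :: List.replicate (x.length-1-c) false) := by
          apply Finset.sum_congr rfl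
          intro c hc
          simp only [Finset.mem_range] at hc
          exact honetrue c (x.length - 1 - c) (by omega)
        rw [← hzero] at e1 e2
        omega
      · rw [heq]
        exact honetrue c d (by omega)
      · have hzero2 : ∀ i0, occ (factorAt w i0 n) x = 0 := by
          intro i0
          rw [occ_eq_card, Finset.card_eq_zero]
          rw [Finset.filter_eq_empty_iff]
          intro i hi
          simp only [Finset.mem_range, length_factorAt] at hi
          intro hpre'
          rw [drop_factorAt] at hpre'
          have hlen2 : x.length ≤ n - i := by simpa using hpre'.length_le
          have g1 := hpre'.getElem (show j1 < x.length by omega)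
          have g2 := hpre'.getElem (show j2 < x.length by omega)
          rw [getElem_factorAt w _ _ j1 (by omega)] at g1
          rw [getElem_factorAt w _ _ j2 (by omega)] at g2
          rw [List.getD_eq_getElem _ _ (by omega)] at ht1 ht2
          rw [ht1] at g1
          rw [ht2] at g2
          exact gap h (show i0 + i + j1 < i0 + i + j2 by omega) (by omega) g1.symm g2.symm
        rw [hzero2 iu, hzero2 iv]

section Counting
variable (w : ℕ → Bool) (n : ℕ)

def cls (k' i : ℕ) : Set (List Bool) :=
  {v | (∃ j, v = factorAt w j n) ∧ KAbEq k' v (factorAt w i n)}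

def Classes (k' : ℕ) : Set (Set (List Bool)) := {C | ∃ i, C = cls w n k' i}

lemma rho_eq (k' : ℕ) : rho k' w n = (Classes w n k').ncard := rfl

lemma mem_cls_self (k' i : ℕ) : factorAt w i n ∈ cls w n k' i :=
  ⟨⟨i, rfl⟩, KAbEq.refl _ _⟩

variable {w n}

lemma cls_eq_iff {k' i i' : ℕ} :
    cls w n k' i = cls w n k' i' ↔ KAbEq k' (factorAt w i n) (factorAt w i' n) := by
  constructor
  · intro heq
    have : factorAt w i n ∈ cls w n k' i' := heq ▸ mem_cls_self w n k' i
    exact this.2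
  · intro hkab
    ext v
    constructor
    · rintro ⟨hf, hv⟩
      exact ⟨hf, hv.trans' hkab⟩
    · rintro ⟨hf, hv⟩
      exact ⟨hf, hv.trans' hkab.symm'⟩

variable (w n) in
def FactSet : Set (List Bool) := {v | ∃ j, v = factorAt w j n}

lemma fact_finite : (FactSet w n).Finite := by
  apply Set.Finite.subset (List.finite_length_eq Bool n)
  rintro v ⟨j, rfl⟩
  simp

lemma classes_finite (k' : ℕ) : (Classes w n k').Finite := by
  apply Set.Finite.subset (fact_finite (w := w) (n := n)).finite_subsets
  rintro C ⟨i, rfl⟩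
  intro v hv
  exact hv.1

variable (w n) in
def fmap (C : Set (List Bool)) : Set (List Bool) :=
  {v | (∃ j, v = factorAt w j n) ∧ ∃ u ∈ C, KAbEq 1 v u}

lemma fmap_cls {k' : ℕ} (hk' : 1 ≤ k') (i : ℕ) : fmap w n (cls w n k' i) = cls w n 1 i := by
  ext v
  constructor
  · rintro ⟨hf, u, hu, h1⟩
    exact ⟨hf, h1.trans' (hu.2.mono hk')⟩
  · rintro ⟨hf, hv⟩
    exact ⟨hf, factorAt w i n, mem_cls_self w n k' i, hv⟩

lemma rho_one_le {k' : ℕ} (hk' : 1 ≤ k') : rho 1 w n ≤ rho k' w n := by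
  have himg : fmap w n '' Classes w n k' = Classes w n 1 := by
    ext C
    constructor
    · rintro ⟨C', ⟨i, rfl⟩, rfl⟩
      exact ⟨i, fmap_cls hk' i⟩
    · rintro ⟨i, rfl⟩
      exact ⟨cls w n k' i, ⟨i, rfl⟩, fmap_cls hk' i⟩
  rw [rho_eq, rho_eq, ← himg]
  exact Set.ncard_image_le (classes_finite k')

open Classical in
noncomputable def repOf (C : Set (List Bool)) : List Bool :=
  if h : C.Nonempty then h.some else []

lemma repOf_mem {C : Set (List Bool)} (h : C.Nonempty) : repOf C ∈ C := by
  classical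
  rw [repOf]
  rw [dif_pos h]
  exact h.some_mem

lemma repOf_singleton (l : List Bool) : repOf {l} = l := by
  have h : ({l} : Set (List Bool)).Nonempty := ⟨l, rfl⟩
  have := repOf_mem h
  simpa using this

lemma ncard_sprod {α β : Type*} (s : Set α) (t : Set β) :
    (s ×ˢ t).ncard = s.ncard * t.ncard := by
  rw [← Nat.card_coe_set_eq, ← Nat.card_coe_set_eq, ← Nat.card_coe_set_eq,
    ← Nat.card_prod]
  exact Nat.card_congr (Equiv.Set.prod s t)

lemma ncard_len (m : ℕ) : ({l : List Bool | l.length = m}).ncard = 2 ^ m := by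
  rw [← Nat.card_coe_set_eq]
  have e : ↥{l : List Bool | l.length = m} ≃ List.Vector Bool m :=
    Equiv.subtypeEquivRight (fun l => Iff.rfl)
  rw [Nat.card_congr e, Nat.card_eq_fintype_card, card_vector, Fintype.card_bool]

end Counting

lemma two_pow_sq (m : ℕ) : (2:ℕ) ^ m * 2 ^ m = 4 ^ m := by
  rw [← pow_add, show m + m = 2 * m by ring, pow_mul]
  norm_num

lemma part2 (w : ℕ → Bool) (k : ℕ) (hk : 1 ≤ k)
    (h : ∀ i, occ (factorAt w i k) [true] ≤ 1) (n : ℕ) :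
    rho 1 w n ≤ rho k w n ∧ rho k w n ≤ rho 1 w n * 4 ^ (k - 1) := by
  have hrho1pos : 1 ≤ rho 1 w n := by
    rw [rho_eq]
    rw [Nat.one_le_iff_ne_zero]
    intro h0
    have := (Set.ncard_pos (classes_finite 1)).mpr ⟨cls w n 1 0, 0, rfl⟩
    omega
  refine ⟨rho_one_le hk, ?_⟩
  by_cases hn : k - 1 ≤ n
  · -- large n: inject classes into (1-classes) × prefixes × suffixes
    set P : Set (List Bool) := {l : List Bool | l.length = k - 1} with hP
    set g : Set (List Bool) → Set (List Bool) × List Bool × List Bool :=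
      fun C => (fmap w n C, (repOf C).take (k-1),
        (repOf C).drop ((repOf C).length - (k-1))) with hg
    have key : ∀ i, g (cls w n k i) = (cls w n 1 i, (factorAt w i n).take (k-1),
        (factorAt w i n).drop (n - (k-1))) := by
      intro i
      have hne : (cls w n k i).Nonempty := ⟨factorAt w i n, mem_cls_self w n k i⟩
      have hmem := repOf_mem hne
      have hkab : KAbEq k (repOf (cls w n k i)) (factorAt w i n) := hmem.2
      have h1 : (repOf (cls w n k i)).take (k-1) = (factorAt w i n).take (k-1) :=
        take_eq_of_kabeq hk hkab
      have h2 : (repOf (cls w n k i)).drop ((repOf (cls w n k i)).length - (k-1)) =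
          (factorAt w i n).drop ((factorAt w i n).length - (k-1)) :=
        drop_eq_of_kabeq hk hkab
      rw [hg]
      simp only [fmap_cls hk i, h1, h2, length_factorAt]
    have hinj : Set.InjOn g (Classes w n k) := by
      rintro C ⟨i, rfl⟩ C' ⟨i', rfl⟩ heq
      rw [key i, key i'] at heq
      simp only [Prod.mk.injEq] at heq
      obtain ⟨e1, e2, e3⟩ := heq
      apply cls_eq_iff.mpr
      apply (part1 w k hk h n hn _ _ ⟨i, rfl⟩ ⟨i', rfl⟩).mpr
      refine ⟨cls_eq_iff.mp e1, e2, ?_⟩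
      rw [length_factorAt, length_factorAt]
      exact e3
    have hmaps : ∀ C ∈ Classes w n k, g C ∈ (Classes w n 1) ×ˢ (P ×ˢ P) := by
      rintro C ⟨i, rfl⟩
      rw [key i]
      refine ⟨⟨i, rfl⟩, ?_, ?_⟩
      · simp only [hP, Set.mem_setOf_eq, List.length_take, length_factorAt]
        omega
      · simp only [hP, Set.mem_setOf_eq, List.length_drop, length_factorAt]
        omega
    have hfin : ((Classes w n 1) ×ˢ (P ×ˢ P)).Finite := by
      apply Set.Finite.prod (classes_finite 1)
      exact Set.Finite.prod (List.finite_length_eq Bool (k-1)) (List.finite_length_eq Bool (k-1))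
    have hle := Set.ncard_le_ncard_of_injOn g hmaps hinj hfin
    rw [show rho k w n = (Classes w n k).ncard from rfl, show rho 1 w n = (Classes w n 1).ncard from rfl]
    calc (Classes w n k).ncard ≤ ((Classes w n 1) ×ˢ (P ×ˢ P)).ncard := hle
      _ = (Classes w n 1).ncard * (2^(k-1) * 2^(k-1)) := by
          rw [ncard_sprod, ncard_sprod, hP, ncard_len]
      _ = (Classes w n 1).ncard * 4^(k-1) := by rw [two_pow_sq]
  · -- small n: classes are singletons
    push_neg at hn
    have hsing : ∀ i, cls w n k i = {factorAt w i n} := by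
      intro i
      ext v
      constructor
      · rintro ⟨⟨j, rfl⟩, hkab⟩
        have hocc := hkab (factorAt w j n) (by simp; omega)
        have hpos : 0 < occ (factorAt w j n) (factorAt w j n) := by
          rw [occ_eq_card]
          apply Finset.card_pos.mpr
          exact ⟨0, Finset.mem_filter.mpr ⟨Finset.mem_range.mpr (by omega), by simp⟩⟩
        rw [hocc] at hpos
        rw [occ_eq_card] at hpos
        obtain ⟨i2, hi2⟩ := Finset.card_pos.mp hpos
        rw [Finset.mem_filter, Finset.mem_range, length_factorAt] at hi2
        obtain ⟨hi2n, hi2pre⟩ := hi2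
        have hlen2 := hi2pre.length_le
        simp only [length_factorAt, List.length_drop] at hlen2
        rcases Nat.eq_zero_or_pos n with hn0 | hn0
        · subst hn0
          have e1 : factorAt w j 0 = [] := by simp [factorAt]
          have e2 : factorAt w i 0 = [] := by simp [factorAt]
          rw [e1, e2]
          rfl
        · have hi20 : i2 = 0 := by omega
          subst hi20
          rw [List.drop_zero] at hi2pre
          have := hi2pre.eq_of_length (by simp)
          exact this
      · rintro hv
        rw [Set.mem_singleton_iff] at hv
        subst hv
        exact mem_cls_self w n k i
    have hcls : Classes w n k = {C | ∃ i, C = {factorAt w i n}} := by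
      ext C
      constructor
      · rintro ⟨i, rfl⟩
        exact ⟨i, hsing i⟩
      · rintro ⟨i, rfl⟩
        exact ⟨i, (hsing i).symm⟩
    have hle1 : rho k w n ≤ (FactSet w n).ncard := by
      rw [rho_eq, hcls]
      refine Set.ncard_le_ncard_of_injOn repOf ?_ ?_ fact_finite
      · rintro C ⟨i, rfl⟩
        rw [repOf_singleton]
        exact ⟨i, rfl⟩
      · rintro C ⟨i, rfl⟩ C' ⟨i', rfl⟩ heq
        rw [repOf_singleton, repOf_singleton] at heq
        rw [heq]
    have hle2 : (FactSet w n).ncard ≤ 2 ^ n := by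
      rw [← ncard_len n]
      exact Set.ncard_le_ncard (by rintro v ⟨j, rfl⟩; simp) (List.finite_length_eq Bool n)
    have hle3 : (2:ℕ) ^ n ≤ 4 ^ (k-1) := by
      rw [← two_pow_sq, ← pow_add]
      apply Nat.pow_le_pow_right (by norm_num)
      omega
    calc rho k w n ≤ 2 ^ n := le_trans hle1 hle2
      _ ≤ 4 ^ (k-1) := hle3
      _ ≤ rho 1 w n * 4 ^ (k-1) := Nat.le_mul_of_pos_left _ (by omega)


theorem stmt14 (w : ℕ → Bool) (k : ℕ) (hk : 1 ≤ k)
    (h : ∀ i, occ (factorAt w i k) [true] ≤ 1) :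
    (∀ n : ℕ, k - 1 ≤ n → ∀ u v : List Bool,
      (∃ i, u = factorAt w i n) → (∃ i, v = factorAt w i n) →
      (KAbEq k u v ↔ KAbEq 1 u v ∧ u.take (k - 1) = v.take (k - 1) ∧
        u.drop (u.length - (k - 1)) = v.drop (v.length - (k - 1)))) ∧
    (∀ n : ℕ, rho 1 w n ≤ rho k w n ∧ rho k w n ≤ rho 1 w n * 4 ^ (k - 1)) := by
  constructor
  · intro n hn u v hu hv
    exact part1 w k hk h n hn u v hu hv
  · intro n
    exact part2 w k hk h n
end

section
/- Let n_1, n_2, … be a sequence of integers each greater than 1, set m_0 = 1 and m_j = n_1⋯n_j, and define U = a_1 a_2 a_3 … by a_i = 0 if the largest j with m_j | i is even and a_i = 1 otherwise. Then U is uniformly recurrent: for every factor u of U there is an N such that every factor of U of length N contains u. -/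
theorem stmt16 (f : ℕ → ℕ) (hf : ∀ j, 1 ≤ j → 2 ≤ f j)
    (m : ℕ → ℕ) (hm0 : m 0 = 1) (hms : ∀ j, m (j + 1) = m j * f (j + 1))
    (U : ℕ → Bool)
    (hU : ∀ i : ℕ, U i = decide (Odd (sSup { j : ℕ | m j ∣ (i + 1) }))) :
    ∀ n i : ℕ, ∃ N : ℕ, n ≤ N ∧ ∀ l : ℕ, ∃ d : ℕ, d + n ≤ N ∧
      factorAt U (l + d) n = factorAt U i n := by
  -- divisibility monotonicity
  have hm_dvd : ∀ j J, j ≤ J → m j ∣ m J := by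
    intro j J hjJ
    induction J with
    | zero =>
      interval_cases j
      exact dvd_refl _
    | succ J ih =>
      rcases Nat.lt_or_ge j (J + 1) with h | h
      · exact (ih (Nat.lt_succ_iff.mp h)).trans ⟨f (J + 1), hms J⟩
      · have hj : j = J + 1 := le_antisymm hjJ h
        subst hj; exact dvd_refl _
  -- one-step periodicity off multiples of m J
  have hstep : ∀ J p, ¬ m J ∣ (p + 1) → U (p + m J) = U p := by
    intro J p hnd
    have hset : { j : ℕ | m j ∣ (p + m J + 1) } = { j : ℕ | m j ∣ (p + 1) } := by
      ext j
      simp only [Set.mem_setOf_eq]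
      rcases le_or_gt j J with hj | hj
      · have h1 : m j ∣ m J := hm_dvd j J hj
        constructor
        · intro h
          have h2 := Nat.dvd_sub h h1
          simpa [show p + m J + 1 - m J = p + 1 by omega] using h2
        · intro h
          have : p + m J + 1 = (p + 1) + m J := by ring
          rw [this]; exact Nat.dvd_add h h1
      · have hJj : m J ∣ m j := hm_dvd J j hj.le
        constructor
        · intro h
          exfalso; apply hnd
          have h2 : m J ∣ p + m J + 1 := hJj.trans h
          have h3 := Nat.dvd_sub h2 (dvd_refl (m J))
          simpa [show p + m J + 1 - m J = p + 1 by omega] using h3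
        · intro h
          exact absurd (hJj.trans h) hnd
    rw [hU (p + m J), hU p, hset]
  -- iterated periodicity
  have hiter : ∀ J k p, ¬ m J ∣ (p + 1) → U (p + k * m J) = U p := by
    intro J k p hnd
    induction k with
    | zero => simp
    | succ k ih =>
      have hnd2 : ¬ m J ∣ (p + k * m J + 1) := by
        intro h
        apply hnd
        have hd : m J ∣ k * m J := dvd_mul_left _ _
        have := Nat.dvd_sub h hd
        simpa [show p + k * m J + 1 - k * m J = p + 1 by omega] using this
      calc U (p + (k + 1) * m J) = U ((p + k * m J) + m J) := by ring_nf
        _ = U (p + k * m J) := hstep J _ hnd2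
        _ = U p := ih
  -- growth of m
  have hmg : ∀ j, j + 1 ≤ m j := by
    intro j
    induction j with
    | zero => omega
    | succ j ih =>
      have h2 := hf (j + 1) (by omega)
      have := hms j
      nlinarith
  intro n i
  set J := i + n with hJ
  set M := m J with hMdef
  have hM : i + n < M := by have := hmg J; omega
  have hMpos : 0 < M := by omega
  -- factor equality at all translates by multiples of M
  have hfac : ∀ k, factorAt U (i + k * M) n = factorAt U i n := by
    intro k
    unfold factorAt
    apply List.map_congr_left
    intro j hj
    have hjn : j < n := List.mem_range.mp hj
    have hnd : ¬ M ∣ (i + j + 1) := by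
      intro h
      have := Nat.le_of_dvd (by omega) h
      omega
    calc U (i + k * M + j) = U ((i + j) + k * M) := by ring_nf
      _ = U (i + j) := hiter J k (i + j) hnd
  refine ⟨i + M + n, by omega, ?_⟩
  intro l
  set q := (l - i) / M with hq
  have hkey := Nat.div_add_mod (l - i) M
  have hmod : (l - i) % M < M := Nat.mod_lt _ hMpos
  set A := M * q with hA
  set B := (l - i) % M with hB
  have hAB : A + B = l - i := hkey
  have hq1 : (q + 1) * M = A + M := by rw [hA]; ring
  refine ⟨i + (q + 1) * M - l, by omega, ?_⟩
  have hl : l + (i + (q + 1) * M - l) = i + (q + 1) * M := by omega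
  rw [hl]
  exact hfac (q + 1)
end

section
/- With U defined from a sequence n_1, n_2, … of integers > 1 as: m_0 = 1, m_j = n_1⋯n_j, a_i = 0 iff the largest j with m_j | i is even, U = a_1 a_2 …; for every n ≥ 1 let n' be the unique index with m_{n'−1} < n ≤ m_{n'}. Then the Abelian complexity satisfies ρ^{(1)}_U(n) ≤ n' + 1, and ρ^{(1)}_U(m_j) = 2 for all j ≥ 1. -/
lemma occ_single {α : Type*} [DecidableEq α] (u : List α) (a : α) :
    occ u [a] = u.count a := by
  induction u with
  | nil => simp [occ]
  | cons b tl ih =>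
    rw [List.count_cons]
    unfold occ at ih ⊢
    simp only [List.length_cons]
    rw [List.range_succ_eq_map, List.filter_cons]
    by_cases hab : a = b
    · subst hab
      simp [List.filter_map, List.cons_prefix_cons, ih, Function.comp_def]
    · simp [List.filter_map, List.cons_prefix_cons, ih, hab, Ne.symm hab, Function.comp_def]

lemma count_add (u : List Bool) : u.count true + u.count false = u.length := by
  induction u with
  | nil => simp
  | cons b tl ih =>
    rw [List.count_cons, List.count_cons, List.length_cons]
    cases b <;> simp <;> omega

lemma factorAt_length {α : Type*} (w : ℕ → α) (i n : ℕ) : (factorAt w i n).length = n := by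
  simp [factorAt]

/-- The set of factors of length `n` having exactly `c` letters `true`. -/
def PsiSet (U : ℕ → Bool) (n : ℕ) (c : ℕ) : Set (List Bool) :=
  {v | (∃ j, v = factorAt U j n) ∧ v.count true = c}

lemma kabeq_iff (u v : List Bool) (h : u.length = v.length) :
    KAbEq 1 u v ↔ u.count true = v.count true := by
  constructor
  · intro hk
    have := hk [true] (by simp)
    rwa [occ_single, occ_single] at this
  · intro hc x hx
    match x with
    | [] => rw [occ_nil, occ_nil, h]
    | [a] =>
      rw [occ_single, occ_single]
      cases a
      · have h1 := count_add u
        have h2 := count_add v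
        omega
      · exact hc
    | a :: b :: t => simp at hx

lemma classOf_eq (U : ℕ → Bool) (n i : ℕ) :
    { v | (∃ j : ℕ, v = factorAt U j n) ∧ KAbEq 1 v (factorAt U i n) }
      = PsiSet U n ((factorAt U i n).count true) := by
  ext v
  simp only [Set.mem_setOf_eq, PsiSet]
  constructor
  · rintro ⟨⟨j, rfl⟩, hk⟩
    exact ⟨⟨j, rfl⟩, (kabeq_iff _ _ (by rw [factorAt_length, factorAt_length])).1 hk⟩
  · rintro ⟨⟨j, rfl⟩, hc⟩
    exact ⟨⟨j, rfl⟩, (kabeq_iff _ _ (by rw [factorAt_length, factorAt_length])).2 hc⟩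

lemma rho_one_eq (U : ℕ → Bool) (n : ℕ) :
    rho 1 U n = Set.ncard (PsiSet U n ''
      Set.range (fun p => (factorAt U p n).count true)) := by
  unfold rho
  congr 1
  ext C
  simp only [Set.mem_setOf_eq, Set.mem_image, Set.mem_range]
  constructor
  · rintro ⟨i, rfl⟩
    exact ⟨(factorAt U i n).count true, ⟨i, rfl⟩, (classOf_eq U n i).symm⟩
  · rintro ⟨c, ⟨i, rfl⟩, rfl⟩
    exact ⟨i, (classOf_eq U n i).symm⟩

/-! ### Alternating sums -/

lemma alt_parity_sum : ∀ J : ℕ, (∑ j ∈ Finset.Icc 1 J, (-1 : ℤ)^(j+1)) = if Odd J then 1 else 0 := by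
  intro J
  induction J with
  | zero => simp
  | succ k ih =>
    rw [Finset.sum_Icc_succ_top (by omega), ih]
    rcases Nat.even_or_odd k with h | h
    · have h2 : Odd (k+1) := Even.add_one h
      simp [Nat.not_odd_iff_even.2 h, h2, h.neg_one_pow]
    · have h2 : ¬ Odd (k + 1) := by simp [Nat.even_add_one, Nat.not_even_iff_odd.2 h]
      have h3 : Odd (k + 1 + 1) := by rcases h with ⟨t, ht⟩; exact ⟨t + 1, by omega⟩
      simp [h, h2, h3.neg_one_pow]

/-! ### Division lemmas -/

lemma div_lb (p n c : ℕ) : p / c + n / c ≤ (p + n) / c := Nat.add_div_le_add_div p n c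

lemma div_ub (p n c : ℕ) (hc : 0 < c) : (p + n) / c ≤ p / c + n / c + 1 := by
  rw [Nat.add_div hc]
  split <;> omega

lemma div_ub2 (p n c : ℕ) (hc : 0 < c) (hn : n ≤ c) : (p + n) / c ≤ p / c + 1 := by
  have h2 := Nat.div_add_mod p c
  have h3 := Nat.mod_lt p hc
  have h1 : p + n < (p / c + 2) * c := by nlinarith
  have := (Nat.div_lt_iff_lt_mul hc).2 h1
  omega

lemma div_dvd (p n c : ℕ) (hc : 0 < c) (h : c ∣ n) : (p + n) / c = p / c + n / c := by
  obtain ⟨q, rfl⟩ := h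
  rw [Nat.add_mul_div_left _ _ hc, Nat.mul_div_cancel_left _ hc]

/-! ### The functions used in the floor-sum formula -/


def Scount (U : ℕ → Bool) (N : ℕ) : ℕ := ∑ i ∈ Finset.range N, (if U i then 1 else 0)

def tF (m : ℕ → ℕ) (n p j : ℕ) : ℕ := (p + n) / m j - p / m j

def AS (m : ℕ → ℕ) (n p a k : ℕ) : ℤ :=
  ∑ i ∈ Finset.range k, (-1:ℤ)^i * (tF m n p (a + i) : ℤ)

lemma tF_cast (m : ℕ → ℕ) (n p j : ℕ) :
    (tF m n p j : ℤ) = (((p + n) / m j : ℕ) : ℤ) - ((p / m j : ℕ) : ℤ) := by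
  have : p / m j ≤ (p + n) / m j := Nat.div_le_div_right (Nat.le_add_right p n)
  unfold tF
  omega

lemma tF_bounds' (m : ℕ → ℕ) (n p j : ℕ) (hc : 0 < m j) :
    n / m j ≤ tF m n p j ∧ tF m n p j ≤ n / m j + 1 := by
  have hl := div_lb p n (m j)
  have hu := div_ub p n (m j) hc
  unfold tF
  constructor
  · exact Nat.le_sub_of_add_le (by omega)
  · rw [Nat.sub_le_iff_le_add]
    omega

lemma tF_le_one (m : ℕ → ℕ) (n p j : ℕ) (hc : 0 < m j) (hn : n ≤ m j) :
    tF m n p j ≤ 1 := by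
  have := div_ub2 p n (m j) hc hn
  unfold tF
  rw [Nat.sub_le_iff_le_add]
  omega

lemma tF_of_dvd (m : ℕ → ℕ) (n p j : ℕ) (hc : 0 < m j) (h : m j ∣ n) :
    tF m n p j = n / m j := by
  unfold tF
  rw [div_dvd p n (m j) hc h, Nat.add_sub_cancel_left]

lemma count_factorAt (U : ℕ → Bool) (p n : ℕ) :
    (factorAt U p n).count true = ∑ i ∈ Finset.range n, (if U (p + i) then 1 else 0) := by
  induction n with
  | zero => simp [factorAt]
  | succ k ih =>
    rw [Finset.sum_range_succ, ← ih]
    unfold factorAt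
    rw [List.range_succ, List.map_append, List.count_append]
    cases hc : U (p + k) <;> simp [hc]

lemma cnt_eq_S (U : ℕ → Bool) (p n : ℕ) :
    ((factorAt U p n).count true : ℤ) = (Scount U (p + n) : ℤ) - Scount U p := by
  have h : Scount U (p + n) = Scount U p + ∑ i ∈ Finset.range n, (if U (p + i) then 1 else 0) := by
    unfold Scount
    rw [Finset.sum_range_add]
  rw [count_factorAt, h]
  push_cast
  ring

lemma AS_peel (m : ℕ → ℕ) (n p a k : ℕ) :
    AS m n p a (k + 1) = (tF m n p a : ℤ) - AS m n p (a + 1) k := by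
  unfold AS
  rw [Finset.sum_range_succ']
  have hterm : ∀ x ∈ Finset.range k, (-1:ℤ)^(x+1) * (tF m n p (a + (x+1)) : ℤ)
      = -((-1:ℤ)^x * (tF m n p (a+1+x):ℤ)) := by
    intro x _
    rw [show a + (x+1) = a+1+x from by omega]
    ring
  rw [Finset.sum_congr rfl hterm, Finset.sum_neg_distrib]
  simp only [pow_zero, one_mul, Nat.add_zero]
  ring

lemma AS_split (m : ℕ → ℕ) (n p a d k : ℕ) :
    AS m n p a (d + k) = (∑ i ∈ Finset.range d, (-1:ℤ)^i * (tF m n p (a+i) : ℤ))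
      + (-1:ℤ)^d * AS m n p (a+d) k := by
  unfold AS
  rw [Finset.sum_range_add, Finset.mul_sum]
  congr 1
  refine Finset.sum_congr rfl fun i _ => ?_
  rw [show a + (d + i) = a + d + i from by omega, pow_add]
  ring

/-! ### Lemmas depending on the sequence `m` -/

section Main

variable (f m : ℕ → ℕ) (hf : ∀ j, 1 ≤ j → 2 ≤ f j)
  (hm0 : m 0 = 1) (hms : ∀ j, m (j + 1) = m j * f (j + 1))

include hf hm0 hms

lemma m_ge : ∀ j, j + 1 ≤ m j := by
  intro j
  induction j with
  | zero => omega
  | succ k ih =>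
    have h2 := hf (k+1) (by omega)
    have := hms k
    nlinarith

lemma m_lt_succ : ∀ j, m j < m (j+1) := by
  intro j
  have h1 := m_ge f m hf hm0 hms j
  have h2 := hf (j+1) (by omega)
  have := hms j
  nlinarith

lemma m_mono : StrictMono m :=
  strictMono_nat_of_lt_succ (m_lt_succ f m hf hm0 hms)

omit hf hm0 in
lemma m_dvd : ∀ i j, i ≤ j → m i ∣ m j := by
  intro i j hij
  induction j with
  | zero => rw [Nat.le_zero] at hij; subst hij; rfl
  | succ k ih =>
    rcases Nat.lt_or_ge i (k+1) with h | h
    · exact (ih (by omega)).trans ⟨f (k+1), hms k⟩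
    · have : i = k + 1 := by omega
      subst this; rfl

lemma sup_facts (M : ℕ) (hM : 1 ≤ M) :
    m (sSup {j | m j ∣ M}) ∣ M ∧ (∀ j, m j ∣ M ↔ j ≤ sSup {j | m j ∣ M}) ∧
      sSup {j | m j ∣ M} + 1 ≤ M := by
  have hge := m_ge f m hf hm0 hms
  have hsub : {j | m j ∣ M} ⊆ Set.Iic M := by
    intro j hj
    have : m j ≤ M := Nat.le_of_dvd hM hj
    have := hge j
    simp only [Set.mem_Iic]; omega
  have hbdd : BddAbove {j | m j ∣ M} := BddAbove.mono hsub (bddAbove_Iic)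
  have hne : {j | m j ∣ M}.Nonempty := ⟨0, by simp [hm0]⟩
  have hmem : m (sSup {j | m j ∣ M}) ∣ M := Nat.sSup_mem hne hbdd
  refine ⟨hmem, fun j => ⟨fun hj => le_csSup hbdd hj, fun hj =>
    (m_dvd f m hms j _ hj).trans hmem⟩, ?_⟩
  have h1 : m (sSup {j | m j ∣ M}) ≤ M := Nat.le_of_dvd hM hmem
  have := hge (sSup {j | m j ∣ M})
  omega

lemma ind_sum (M K : ℕ) (hM : 1 ≤ M) (hK : M ≤ m K) :
    (∑ j ∈ Finset.Icc 1 K, (-1:ℤ)^(j+1) * (if m j ∣ M then 1 else 0))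
      = if Odd (sSup {j | m j ∣ M}) then 1 else 0 := by
  obtain ⟨hJd, hiff, _⟩ := sup_facts f m hf hm0 hms M hM
  set J := sSup {j | m j ∣ M} with hJ
  have hJK : J ≤ K := by
    have h1 : m J ≤ m K := le_trans (Nat.le_of_dvd hM hJd) hK
    exact (m_mono f m hf hm0 hms).le_iff_le.1 h1
  have : ∀ j ∈ Finset.Icc 1 K, (-1:ℤ)^(j+1) * (if m j ∣ M then 1 else 0)
      = if j ∈ Finset.Icc 1 J then (-1:ℤ)^(j+1) else 0 := by
    intro j hj
    simp only [Finset.mem_Icc] at hj ⊢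
    by_cases h : m j ∣ M
    · rw [if_pos h, if_pos ⟨hj.1, (hiff j).1 h⟩, mul_one]
    · rw [if_neg h, if_neg (by intro hc; exact h ((hiff j).2 hc.2)), mul_zero]
  rw [Finset.sum_congr rfl this, Finset.sum_ite_mem]
  have hinter : Finset.Icc 1 K ∩ Finset.Icc 1 J = Finset.Icc 1 J := by
    ext x; simp only [Finset.mem_inter, Finset.mem_Icc]; omega
  rw [hinter, alt_parity_sum]

lemma S_formula (U : ℕ → Bool)
    (hU : ∀ i : ℕ, U i = decide (Odd (sSup { j : ℕ | m j ∣ (i + 1) }))) :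
    ∀ N K, N < m K →
      (Scount U N : ℤ) = ∑ j ∈ Finset.Icc 1 K, (-1:ℤ)^(j+1) * ((N / m j : ℕ) : ℤ) := by
  intro N
  induction N with
  | zero => intro K hK; simp [Scount]
  | succ N ih =>
    intro K hK
    have hNK : N < m K := by omega
    have hstep : ∀ j : ℕ, (((N + 1) / m j : ℕ) : ℤ)
        = ((N / m j : ℕ) : ℤ) + (if m j ∣ N + 1 then 1 else 0) := by
      intro j
      rw [Nat.succ_div]
      split <;> push_cast <;> ring
    have hsum : (∑ j ∈ Finset.Icc 1 K, (-1:ℤ)^(j+1) * (((N+1) / m j : ℕ) : ℤ))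
        = (∑ j ∈ Finset.Icc 1 K, (-1:ℤ)^(j+1) * ((N / m j : ℕ) : ℤ))
          + ∑ j ∈ Finset.Icc 1 K, (-1:ℤ)^(j+1) * (if m j ∣ N + 1 then 1 else 0) := by
      rw [← Finset.sum_add_distrib]
      exact Finset.sum_congr rfl (fun j _ => by rw [hstep j]; ring)
    rw [hsum, ← ih K hNK, ind_sum f m hf hm0 hms (N+1) K (by omega) (by omega)]
    have hS : Scount U (N + 1) = Scount U N + (if U N then 1 else 0) :=
      Finset.sum_range_succ _ N
    rw [hS]
    have : (if U N then (1:ℕ) else 0) = (if Odd (sSup {j | m j ∣ N + 1}) then 1 else 0) := by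
      rw [hU N]
      by_cases h : Odd (sSup {j | m j ∣ N + 1}) <;> simp [h]
    rw [this]
    push_cast
    split <;> simp

lemma tF_anti (n p : ℕ) : ∀ j, tF m n p (j + 1) ≤ tF m n p j := by
  intro j
  have hmj : 0 < m j := by have := m_ge f m hf hm0 hms j; omega
  have hb : 2 ≤ f (j + 1) := hf (j + 1) (by omega)
  have hBA : p / m j ≤ (p + n) / m j := Nat.div_le_div_right (Nat.le_add_right p n)
  set A := (p + n) / m j
  set B := p / m j
  have hA : (p + n) / m (j + 1) = A / f (j + 1) := by
    rw [hms j, Nat.div_div_eq_div_mul]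
  have hB : p / m (j + 1) = B / f (j + 1) := by
    rw [hms j, Nat.div_div_eq_div_mul]
  unfold tF
  rw [hA, hB]
  have key : A / f (j+1) ≤ B / f (j+1) + (A - B) := by
    have h1 : A ≤ B + (A - B) * f (j + 1) := by
      have := Nat.le_mul_of_pos_right (A - B) (show 0 < f (j+1) by omega)
      omega
    calc A / f (j+1) ≤ (B + (A - B) * f (j+1)) / f (j+1) := Nat.div_le_div_right h1
    _ = B / f (j+1) + (A - B) := by rw [Nat.add_mul_div_right _ _ (by omega)]
  omega

lemma AS_bound (n p : ℕ) : ∀ k a, 0 ≤ AS m n p a k ∧ AS m n p a k ≤ (tF m n p a : ℤ) := by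
  intro k
  induction k with
  | zero => intro a; simp [AS]
  | succ k ih =>
    intro a
    have hpeel := AS_peel m n p a k
    have h1 := ih (a + 1)
    have h2 := tF_anti f m hf hm0 hms n p a
    constructor
    · rw [hpeel]
      have h3 : AS m n p (a+1) k ≤ (tF m n p (a+1) : ℤ) := h1.2
      have h4 : (tF m n p (a+1) : ℤ) ≤ (tF m n p a : ℤ) := by exact_mod_cast h2
      omega
    · rw [hpeel]
      have := h1.1
      omega

lemma cnt_repr (U : ℕ → Bool)
    (hU : ∀ i : ℕ, U i = decide (Odd (sSup { j : ℕ | m j ∣ (i + 1) })))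
    (n p K : ℕ) (hK : p + n < m K) :
    ((factorAt U p n).count true : ℤ) = AS m n p 1 K := by
  rw [cnt_eq_S, S_formula f m hf hm0 hms U hU (p+n) K hK,
    S_formula f m hf hm0 hms U hU p K (by omega), ← Finset.sum_sub_distrib]
  have h1 : ∀ j ∈ Finset.Icc 1 K,
      (-1:ℤ)^(j+1) * (((p+n) / m j : ℕ) : ℤ) - (-1:ℤ)^(j+1) * ((p / m j : ℕ) : ℤ)
        = (-1:ℤ)^(j+1) * (tF m n p j : ℤ) := by
    intro j _
    rw [tF_cast]
    ring
  rw [Finset.sum_congr rfl h1]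
  rw [← Finset.Ico_add_one_right_eq_Icc, Finset.sum_Ico_eq_sum_range]
  unfold AS
  refine Finset.sum_congr (by norm_num) fun i _ => ?_
  rw [show (1 + i) + 1 = i + 2 from by omega, pow_add]
  ring

end Main

theorem stmt17 (f : ℕ → ℕ) (hf : ∀ j, 1 ≤ j → 2 ≤ f j)
    (m : ℕ → ℕ) (hm0 : m 0 = 1) (hms : ∀ j, m (j + 1) = m j * f (j + 1))
    (U : ℕ → Bool)
    (hU : ∀ i : ℕ, U i = decide (Odd (sSup { j : ℕ | m j ∣ (i + 1) }))) :
    (∀ n n' : ℕ, 1 ≤ n → m (n' - 1) < n → n ≤ m n' → rho 1 U n ≤ n' + 1) ∧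
    (∀ j : ℕ, 1 ≤ j → rho 1 U (m j) = 2) := by
  have hge := m_ge f m hf hm0 hms
  have hpos : ∀ j, 0 < m j := fun j => by have := hge j; omega
  constructor
  · -- Part 1
    intro n n' hn hlow hhigh
    -- n' ≥ 1
    have hn' : 1 ≤ n' := by
      by_contra h
      have : n' = 0 := by omega
      subst this
      rw [hm0] at hhigh
      simp at hlow
      rw [hm0] at hlow
      omega
    obtain ⟨d, rfl⟩ : ∃ d, n' = d + 1 := ⟨n' - 1, by omega⟩
    set cnt : ℕ → ℕ := fun p => (factorAt U p n).count true with hcnt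
    rw [rho_one_eq U n]
    have hfin : (Set.range cnt).Finite := by
      apply Set.Finite.subset (Set.finite_Iic n)
      rintro c ⟨p, rfl⟩
      simp only [Set.mem_Iic, hcnt]
      calc (factorAt U p n).count true ≤ (factorAt U p n).length := List.count_le_length
      _ = n := factorAt_length U p n
    refine le_trans (Set.ncard_image_le hfin) ?_
    -- the bound on the range of cnt
    set F : ℕ → ℤ := fun i => (-1:ℤ)^i * ((n / m (1+i) : ℕ):ℤ) + (if Even i then 0 else -1)
      with hF
    set Lo : ℤ := (∑ i ∈ Finset.range d, F i) + (if Even d then 0 else -1) with hLo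
    have hval : ∀ p, Lo ≤ (cnt p : ℤ) ∧ (cnt p : ℤ) ≤ Lo + (d + 1) := by
      intro p
      have hrepr : (cnt p : ℤ) = AS m n p 1 (d + (p + n + 1)) := by
        apply cnt_repr f m hf hm0 hms U hU
        have := hge (d + (p + n + 1))
        omega
      rw [hrepr, AS_split]
      -- term bounds
      have hterm : ∀ i ∈ Finset.range d,
          F i ≤ (-1:ℤ)^i * (tF m n p (1+i) : ℤ) ∧
            (-1:ℤ)^i * (tF m n p (1+i) : ℤ) ≤ F i + 1 := by
        intro i _
        have hposi := hpos (1+i)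
        obtain ⟨hA, hB⟩ := tF_bounds' m n p (1+i) hposi
        have hA' : ((n / m (1+i) : ℕ) : ℤ) ≤ (tF m n p (1+i) : ℤ) := Int.ofNat_le.mpr hA
        have hB' : ((tF m n p (1+i) : ℕ) : ℤ) ≤ ((n / m (1+i) : ℕ) : ℤ) + 1 := by
          exact_mod_cast Int.ofNat_le.mpr hB
        rcases Nat.even_or_odd i with h | h
        · rw [hF]; simp only [h.neg_one_pow, h, if_pos, one_mul]
          constructor <;> linarith
        · rw [hF]
          simp only [h.neg_one_pow, Nat.not_even_iff_odd.2 h, if_false, reduceIte, neg_one_mul]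
          constructor <;> linarith
      have hs1 : (∑ i ∈ Finset.range d, F i)
          ≤ ∑ i ∈ Finset.range d, (-1:ℤ)^i * (tF m n p (1+i) : ℤ) :=
        Finset.sum_le_sum fun i hi => (hterm i hi).1
      have hs2 : (∑ i ∈ Finset.range d, (-1:ℤ)^i * (tF m n p (1+i) : ℤ))
          ≤ (∑ i ∈ Finset.range d, F i) + d := by
        calc (∑ i ∈ Finset.range d, (-1:ℤ)^i * (tF m n p (1+i) : ℤ))
            ≤ ∑ i ∈ Finset.range d, (F i + 1) := Finset.sum_le_sum fun i hi => (hterm i hi).2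
        _ = (∑ i ∈ Finset.range d, F i) + d := by
            rw [Finset.sum_add_distrib, Finset.sum_const, Finset.card_range]
            simp
      -- tail bound
      have htail := AS_bound f m hf hm0 hms n p (p + n + 1) (1 + d)
      have ht1 : tF m n p (1+d) ≤ 1 :=
        tF_le_one m n p (1+d) (hpos (1+d)) (by rw [show 1 + d = d + 1 from by omega]; exact hhigh)
      have ht2 : (0:ℤ) ≤ AS m n p (1+d) (p+n+1) ∧ AS m n p (1+d) (p+n+1) ≤ 1 := by
        refine ⟨htail.1, le_trans htail.2 ?_⟩
        exact_mod_cast ht1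
      rcases Nat.even_or_odd d with h | h
      · rw [hLo]
        simp only [h.neg_one_pow, h, if_pos, one_mul]
        constructor <;> linarith [ht2.1, ht2.2]
      · rw [hLo]
        simp only [h.neg_one_pow, Nat.not_even_iff_odd.2 h, if_false, reduceIte, neg_one_mul]
        constructor <;> linarith [ht2.1, ht2.2]
    -- conclude the cardinality bound
    have hsub : (fun c : ℕ => (c : ℤ)) '' Set.range cnt ⊆ Set.Icc Lo (Lo + (d + 1)) := by
      rintro x ⟨c, ⟨p, rfl⟩, rfl⟩
      exact ⟨(hval p).1, (hval p).2⟩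
    calc (Set.range cnt).ncard
        = ((fun c : ℕ => (c : ℤ)) '' Set.range cnt).ncard :=
          (Set.ncard_image_of_injective _ (fun a b => by omega)).symm
      _ ≤ (Set.Icc Lo (Lo + (d + 1))).ncard :=
          Set.ncard_le_ncard hsub (Set.finite_Icc _ _)
      _ ≤ d + 1 + 1 := by
          rw [← Finset.coe_Icc, Set.ncard_coe_finset, Int.card_Icc]
          omega
  · -- Part 2
    intro j0 hj0
    set n : ℕ := m j0 with hn
    have hn1 : 1 ≤ n := hpos j0
    have hlt1 : n < m (j0 + 1) := m_lt_succ f m hf hm0 hms j0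
    have hlt2 : m (j0 + 1) < m (j0 + 2) := m_lt_succ f m hf hm0 hms (j0 + 1)
    set cnt : ℕ → ℕ := fun p => (factorAt U p n).count true with hcnt
    set C : ℤ := ∑ i ∈ Finset.range j0, (-1:ℤ)^i * ((n / m (1+i) : ℕ) : ℤ) with hC
    -- general representation
    have hrepr : ∀ p, (cnt p : ℤ) = C + (-1:ℤ)^j0 * AS m n p (1 + j0) (p + n + 1) := by
      intro p
      have h1 : (cnt p : ℤ) = AS m n p 1 (j0 + (p + n + 1)) := by
        apply cnt_repr f m hf hm0 hms U hU
        have := hge (j0 + (p + n + 1))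
        omega
      rw [h1, AS_split]
      congr 1
      refine Finset.sum_congr rfl fun i hi => ?_
      simp only [Finset.mem_range] at hi
      have hdvd : m (1 + i) ∣ n := m_dvd f m hms (1 + i) j0 (by omega)
      have heq : tF m n p (1+i) = n / m (1+i) :=
        tF_of_dvd m n p (1+i) (hpos (1+i)) hdvd
      rw [heq]
    -- cnt 0 = C
    have h0 : (cnt 0 : ℤ) = C := by
      rw [hrepr 0]
      have ht : tF m n 0 (1 + j0) = 0 := by
        unfold tF
        rw [Nat.zero_add, Nat.div_eq_of_lt (by rw [show 1 + j0 = j0 + 1 from by omega]; omega),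
          Nat.zero_div]
      have hb := AS_bound f m hf hm0 hms n 0 (0 + n + 1) (1 + j0)
      rw [ht] at hb
      have : AS m n 0 (1 + j0) (0 + n + 1) = 0 := by
        have := hb.1; have := hb.2; simp at hb ⊢; omega
      rw [this]
      ring
    -- cnt p1 = C + (-1)^j0
    set p1 : ℕ := m (j0 + 1) - n with hp1
    have hp1n : p1 + n = m (j0 + 1) := by omega
    have h1 : (cnt p1 : ℤ) = C + (-1:ℤ)^j0 := by
      rw [hrepr p1]
      have hAS : AS m n p1 (1 + j0) (p1 + n + 1) = 1 := by
        rw [show p1 + n + 1 = (p1 + n) + 1 from rfl, AS_peel]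
        have ht1 : tF m n p1 (1 + j0) = 1 := by
          unfold tF
          rw [show 1 + j0 = j0 + 1 from by omega, hp1n, Nat.div_self (hpos (j0+1)),
            Nat.div_eq_of_lt (by omega)]
        have ht2 : tF m n p1 (1 + j0 + 1) = 0 := by
          unfold tF
          rw [show 1 + j0 + 1 = j0 + 2 from by omega, hp1n,
            Nat.div_eq_of_lt (by omega), Nat.div_eq_of_lt (by omega)]
        have hb := AS_bound f m hf hm0 hms n p1 (p1 + n) (1 + j0 + 1)
        rw [ht2] at hb
        have hz : AS m n p1 (1 + j0 + 1) (p1 + n) = 0 := by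
          have := hb.1; have := hb.2; simp at hb ⊢; omega
        rw [ht1, hz]
        ring
      rw [hAS]
      ring
    -- the two values differ
    have hne : cnt 0 ≠ cnt p1 := by
      intro h
      rw [h, h1] at h0
      rcases Nat.even_or_odd j0 with he | he
      · rw [he.neg_one_pow] at h0; omega
      · rw [he.neg_one_pow] at h0; omega
    -- range cnt = {cnt 0, cnt p1}
    have hrange : Set.range cnt = {cnt 0, cnt p1} := by
      apply Set.Subset.antisymm
      · rintro c ⟨p, rfl⟩
        have hp := hrepr p
        have hb := AS_bound f m hf hm0 hms n p (p + n + 1) (1 + j0)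
        have ht1 : (tF m n p (1 + j0) : ℤ) ≤ 1 := by
          have h' : tF m n p (1 + j0) ≤ 1 := tF_le_one m n p (1 + j0) (hpos (1 + j0))
            (by rw [show 1 + j0 = j0 + 1 from by omega]; omega)
          exact_mod_cast h'

        have hcases : AS m n p (1 + j0) (p + n + 1) = 0 ∨ AS m n p (1 + j0) (p + n + 1) = 1 := by
          have h1 := hb.1; have h2 := le_trans hb.2 ht1
          omega
        rcases hcases with h | h
        · left
          have : (cnt p : ℤ) = (cnt 0 : ℤ) := by rw [hp, h, h0]; ring
          exact_mod_cast this
        · right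
          have : (cnt p : ℤ) = (cnt p1 : ℤ) := by rw [hp, h, h1]; ring
          exact_mod_cast this
      · rintro c (rfl | rfl)
        · exact ⟨0, rfl⟩
        · exact ⟨p1, rfl⟩
    rw [rho_one_eq U n, hrange, Set.image_pair]
    rw [Set.ncard_pair]
    intro hPsi
    have hmem : factorAt U 0 n ∈ PsiSet U n (cnt 0) := ⟨⟨0, rfl⟩, rfl⟩
    rw [hPsi] at hmem
    exact hne hmem.2
end
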